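/- There exists a family {b_α : α < 𝔟} of increasing functions in ω^ω that is unbounded with respect to ≤* such that the ranges b_α(ω) are pairwise almost disjoint and b_α ≤* b_β whenever α < β. -/

import Mathlib

open Cardinal Set Filter Topology TopologicalSpace

/-- `A` is almost contained in `B`. -/
def almSub (A B : Set ℕ) : Prop := (A \ B).Finite

/-- `f ≤* g`: eventual domination. -/
def evLE (f g : ℕ → ℕ) : Prop := {n : ℕ | g n < f n}.Finite

/-- A splitting family on `ω`. -/
def IsSplittingFamily (S : Set (Set ℕ)) : Prop :=
  ∀ A : Set ℕ, A.Infinite → ∃ s ∈ S, (A ∩ s).Infinite ∧ (A \ s).Infinite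

/-- The splitting number `𝔰`. -/
noncomputable def sNum : Cardinal :=
  sInf {c | ∃ S : Set (Set ℕ), IsSplittingFamily S ∧ #S = c}

/-- An `≤*`-unbounded family. -/
def IsUnboundedFamily (F : Set (ℕ → ℕ)) : Prop :=
  ∀ g : ℕ → ℕ, ∃ f ∈ F, ¬ evLE f g

/-- The bounding number `𝔟`. -/
noncomputable def bNum : Cardinal :=
  sInf {c | ∃ F : Set (ℕ → ℕ), IsUnboundedFamily F ∧ #F = c}

/-- The weight of a topological space. -/
noncomputable def wt (X : Type*) [TopologicalSpace X] : Cardinal :=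
  sInf {c | ∃ B : Set (Set X), IsTopologicalBasis B ∧ #B = c}

/-- Zero-dimensional: there is a base of clopen sets. -/
def ZeroDim (X : Type*) [TopologicalSpace X] : Prop :=
  ∃ B : Set (Set X), IsTopologicalBasis B ∧ ∀ s ∈ B, IsClopen s

/-- Countably compact in the sense of the paper: every closed discrete subset is finite. -/
def CtblCompact (X : Type*) [TopologicalSpace X] : Prop :=
  ∀ A : Set X, IsClosed A → DiscreteTopology A → A.Finite

/-- Feebly compact: every locally finite family of nonempty open sets is finite. -/
def FeeblyCompact (X : Type*) [TopologicalSpace X] : Prop :=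
  ∀ F : Set (Set X), (∀ u ∈ F, IsOpen u ∧ u.Nonempty) →
    LocallyFinite (fun u : F => (u : Set X)) → F.Finite

/-- Pseudocompact: Tychonoff and every continuous real-valued function is bounded. -/
def Pseudocompact (X : Type*) [TopologicalSpace X] : Prop :=
  T35Space X ∧ ∀ f : X → ℝ, Continuous f → ∃ M : ℝ, ∀ x, |f x| ≤ M

/-- Pseudonormal space. -/
def Pseudonormal (X : Type*) [TopologicalSpace X] : Prop :=
  ∀ F₀ F₁ : Set X, IsClosed F₀ → IsClosed F₁ → F₀.Countable → Disjoint F₀ F₁ →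
    ∃ U₀ U₁ : Set X, IsOpen U₀ ∧ IsOpen U₁ ∧ F₀ ⊆ U₀ ∧ F₁ ⊆ U₁ ∧ Disjoint U₀ U₁

/-- The Pixley–Roy topology on the finite subsets of `X`. -/
def PRtop (X : Type*) [TopologicalSpace X] : TopologicalSpace (Finset X) :=
  TopologicalSpace.generateFrom
    {t | ∃ (F : Finset X) (U : Set X), IsOpen U ∧
      t = {A : Finset X | F ⊆ A ∧ (A : Set X) ⊆ U}}

/-- A subspace of the Cantor space is a λ-set if each of its countable subsets is Gδ in it. -/
def IsLambdaSet (X : Set (ℕ → Bool)) : Prop :=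
  ∀ C : Set X, C.Countable → IsGδ C

/-- an unbounded `≤*`-increasing `𝔟`-scale of strictly increasing functions
with pairwise almost disjoint ranges. -/
-- auxiliary lemmas
lemma unbounded_univ' : IsUnboundedFamily (Set.univ : Set (ℕ → ℕ)) := by
  intro g
  refine ⟨fun n => g n + 1, Set.mem_univ _, fun h => ?_⟩
  have : {n : ℕ | g n < g n + 1} = Set.univ := by ext n; simp
  rw [evLE, this] at h
  exact Set.infinite_univ h

lemma bNum_mem' : ∃ F : Set (ℕ → ℕ), IsUnboundedFamily F ∧ #F = bNum := by
  have h : Set.Nonempty {c | ∃ F : Set (ℕ → ℕ), IsUnboundedFamily F ∧ #F = c} :=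
    ⟨#(Set.univ : Set (ℕ → ℕ)), Set.univ, unbounded_univ', rfl⟩
  exact csInf_mem h

lemma bounded_of_small' {ι : Type} (p : ι → ℕ → ℕ) (h : #ι < bNum) :
    ∃ g, ∀ i, evLE (p i) g := by
  by_contra hc
  push_neg at hc
  have hunb : IsUnboundedFamily (Set.range p) := fun g => by
    obtain ⟨i, hi⟩ := hc g
    exact ⟨p i, Set.mem_range_self i, hi⟩
  have h2 : bNum ≤ #(Set.range p) := csInf_le' ⟨Set.range p, hunb, rfl⟩
  exact absurd (h2.trans Cardinal.mk_range_le) (not_le.mpr h)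

def col (n m : ℕ) : ℕ := 2^n * (2*m+1) - 1

lemma col_strictMono (n : ℕ) : StrictMono (col n) := by
  intro a b h
  have h2 : (1:ℕ) ≤ 2^n := Nat.one_le_two_pow
  have h3 : 2^n * (2*a+1) < 2^n * (2*b+1) :=
    Nat.mul_lt_mul_of_pos_left (by omega) (by positivity)
  have h4 : 1 ≤ 2^n*(2*a+1) := Nat.one_le_iff_ne_zero.2 (by positivity)
  unfold col
  omega

lemma le_col (n m : ℕ) : m ≤ col n m := by
  have h2 : (1:ℕ) ≤ 2^n := Nat.one_le_two_pow
  have : 2^n * (2*m+1) ≥ 1 * (2*m+1) := Nat.mul_le_mul_right _ h2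
  unfold col; omega

lemma pow2_odd_inj : ∀ n k a b : ℕ, 2^n * (2*a+1) = 2^k*(2*b+1) → n = k ∧ a = b := by
  intro n
  induction n with
  | zero =>
    intro k a b h
    cases k with
    | zero => simp at h; omega
    | succ k =>
      rw [pow_succ] at h
      have h' : 2*a+1 = 2*(2^k*(2*b+1)) := by
        rw [pow_zero, one_mul] at h; rw [h]; ring
      omega
  | succ n ih =>
    intro k a b h
    cases k with
    | zero =>
      rw [pow_succ] at h
      have h' : 2*(2^n*(2*a+1)) = 2*b+1 := by
        rw [pow_zero, one_mul] at h; rw [← h]; ring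
      omega
    | succ k =>
      rw [pow_succ, pow_succ] at h
      have h' : 2^n * (2*a+1) = 2^k * (2*b+1) := by
        have := Nat.eq_of_mul_eq_mul_right (show 0 < 2 by norm_num)
          (by linarith [h] : 2^n * (2*a+1) * 2 = 2^k * (2*b+1) * 2)
        exact this
      obtain ⟨h1, h2⟩ := ih k a b h'
      exact ⟨by omega, h2⟩

lemma col_inj {n k a b : ℕ} (h : col n a = col k b) : n = k ∧ a = b := by
  have hn : (1:ℕ) ≤ 2^n * (2*a+1) := Nat.one_le_iff_ne_zero.2 (by positivity)
  have hk : (1:ℕ) ≤ 2^k * (2*b+1) := Nat.one_le_iff_ne_zero.2 (by positivity)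
  unfold col at h
  exact pow2_odd_inj n k a b (by omega)

def buildM (g' f : ℕ → ℕ) : ℕ → ℕ
  | 0 => g' 0 + f 0 + 1
  | n+1 => g' (n+1) + f (n+1) + col n (buildM g' f n) + 1

lemma buildM_gt_g' (g' f : ℕ → ℕ) (n : ℕ) : g' n < buildM g' f n := by
  cases n <;> simp [buildM] <;> omega

lemma buildM_gt_f (g' f : ℕ → ℕ) (n : ℕ) : f n < buildM g' f n := by
  cases n <;> simp [buildM] <;> omega

lemma buildM_strict (g' f : ℕ → ℕ) :
    StrictMono (fun n => col n (buildM g' f n)) := by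
  apply strictMono_nat_of_lt_succ
  intro n
  calc col n (buildM g' f n) < buildM g' f (n+1) := by simp [buildM]
    _ ≤ col (n+1) (buildM g' f (n+1)) := le_col _ _

lemma card_small' (i : bNum.ord.ToType) : #{j // j < i} < bNum :=
  Cardinal.mk_Iio_ord_toType i

noncomputable def scaleM (f : bNum.ord.ToType → ℕ → ℕ) : bNum.ord.ToType → ℕ → ℕ :=
  WellFounded.fix wellFounded_lt (fun i prev =>
    buildM (Classical.choose (bounded_of_small'
      (fun j : {j // j < i} => prev j j.2) (card_small' i))) (f i))

lemma scaleM_eq (f : bNum.ord.ToType → ℕ → ℕ) (i : bNum.ord.ToType) :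
    scaleM f i = buildM (Classical.choose (bounded_of_small'
      (fun j : {j // j < i} => scaleM f j) (card_small' i))) (f i) := by
  rw [scaleM, WellFounded.fix_eq]

noncomputable def Bf (f : bNum.ord.ToType → ℕ → ℕ) (i : bNum.ord.ToType) (n : ℕ) : ℕ :=
  col n (scaleM f i n)

lemma Bf_gt_f (f : bNum.ord.ToType → ℕ → ℕ) (i : bNum.ord.ToType) (n : ℕ) :
    f i n < Bf f i n := by
  unfold Bf
  rw [scaleM_eq]
  exact lt_of_lt_of_le (buildM_gt_f _ _ _) (le_col _ _)

lemma Bf_strict (f : bNum.ord.ToType → ℕ → ℕ) (i : bNum.ord.ToType) :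
    StrictMono (Bf f i) := by
  unfold Bf
  conv in scaleM f i => rw [scaleM_eq]
  exact buildM_strict _ _

lemma scaleM_dom (f : bNum.ord.ToType → ℕ → ℕ) {i j : bNum.ord.ToType} (h : j < i) :
    {n | scaleM f i n ≤ scaleM f j n}.Finite := by
  have hspec := Classical.choose_spec (bounded_of_small'
      (fun j : {j // j < i} => scaleM f j) (card_small' i))
  have hg := hspec ⟨j, h⟩
  apply hg.subset
  intro n hn
  simp only [Set.mem_setOf_eq] at hn ⊢
  have : Classical.choose (bounded_of_small'
      (fun j : {j // j < i} => scaleM f j) (card_small' i)) n < scaleM f i n := by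
    conv_rhs => rw [scaleM_eq]
    exact buildM_gt_g' _ _ _
  exact lt_of_lt_of_le this hn

lemma Bf_ad (f : bNum.ord.ToType → ℕ → ℕ) {i j : bNum.ord.ToType} (h : j < i) :
    (Set.range (Bf f i) ∩ Set.range (Bf f j)).Finite := by
  apply ((scaleM_dom f h).image (fun n => col n (scaleM f i n))).subset
  rintro x ⟨⟨n, hn⟩, ⟨k, hk⟩⟩
  obtain ⟨rfl, he⟩ := col_inj
    (show col n (scaleM f i n) = col k (scaleM f j k) from hn.trans hk.symm)
  exact ⟨n, by simp only [Set.mem_setOf_eq]; omega, hn⟩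

lemma Bf_evLE (f : bNum.ord.ToType → ℕ → ℕ) {i j : bNum.ord.ToType} (h : i < j) :
    evLE (Bf f i) (Bf f j) := by
  apply (scaleM_dom f h).subset
  intro n hn
  simp only [Set.mem_setOf_eq] at hn ⊢
  by_contra hc
  push_neg at hc
  have h2 := col_strictMono n hc
  unfold Bf at hn
  omega

theorem stmt_2 :
    ∃ b : {α : Ordinal // α < bNum.ord} → (ℕ → ℕ),
      (∀ α, StrictMono (b α)) ∧
      IsUnboundedFamily (Set.range b) ∧
      (∀ α β, α ≠ β → (Set.range (b α) ∩ Set.range (b β)).Finite) ∧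
      (∀ α β, α < β → evLE (b α) (b β)) := by
  obtain ⟨F, hF, hcard⟩ := bNum_mem'
  have hI : #(bNum.ord.ToType) = bNum := by
    rw [Cardinal.mk_toType, Cardinal.card_ord]
  obtain ⟨e⟩ := Cardinal.eq.1 (hcard.trans hI.symm)
  set f : bNum.ord.ToType → ℕ → ℕ := fun i => ((e.symm i : F) : ℕ → ℕ) with hf
  set iso := (Ordinal.ToType.mk (o := bNum.ord)) with hiso
  refine ⟨fun α => Bf f (iso ⟨α.1, α.2⟩), ?_, ?_, ?_, ?_⟩
  · intro α; exact Bf_strict f _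
  · intro g
    obtain ⟨f₀, hf₀F, hf₀⟩ := hF g
    set i := e ⟨f₀, hf₀F⟩ with hi
    set α : Set.Iio bNum.ord := iso.symm i with hα
    refine ⟨Bf f (iso ⟨α.1, α.2⟩), ⟨⟨α.1, α.2⟩, rfl⟩, ?_⟩
    have hii : iso ⟨α.1, α.2⟩ = i := by
      rw [hα]; exact iso.apply_symm_apply i
    rw [hii]
    intro hevle
    apply hf₀
    have hfi : f i = f₀ := by rw [hf, hi]; simp
    have hsub : {n | g n < f₀ n} ⊆ {n | g n < Bf f i n} := by
      intro n hn
      simp only [Set.mem_setOf_eq] at hn ⊢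
      have := Bf_gt_f f i n
      rw [hfi] at this
      omega
    exact hevle.subset hsub
  · intro α β hne
    have hne' : iso ⟨α.1, α.2⟩ ≠ iso ⟨β.1, β.2⟩ := by
      intro h
      apply hne
      have h2 := iso.injective h
      exact Subtype.ext (congrArg Subtype.val h2)
    rcases lt_or_gt_of_ne hne' with h | h
    · rw [Set.inter_comm]; exact Bf_ad f h
    · exact Bf_ad f h
  · intro α β hlt
    have h : iso ⟨α.1, α.2⟩ < iso ⟨β.1, β.2⟩ := by
      rw [OrderIso.lt_iff_lt]
      exact hlt
    exact Bf_evLE f h
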